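/- Let K ⊆ ℝⁿ be a compact convex set with K ∩ ℤⁿ = ∅ that admits an enumerative branching proof T. Then there exists a finite list L = (a_1, …, a_N) of vectors in ℤⁿ with N ≤ 2|T| − 1 such that CG(K, L) = ∅. -/

import Mathlib

/-- The CG cut of `S` induced by `w`. -/
noncomputable def cgCut {n : ℕ} (S : Set (Fin n → ℝ)) (w : Fin n → ℝ) :
    Set (Fin n → ℝ) :=
  S ∩ {x | ∑ j, w j * x j ≤ (⌊sSup ((fun x => ∑ j, w j * x j) '' S)⌋ : ℝ)}

/-- Sequential application of CG cuts, left to right. -/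
noncomputable def cgList {n : ℕ} (S : Set (Fin n → ℝ)) (L : List (Fin n → ℝ)) :
    Set (Fin n → ℝ) :=
  L.foldl cgCut S

/-- An enumerative branching proof: each node branches on an integer direction
`a` and enumerates all integers `b` in an interval `[l, u]` containing
`{a·x : x ∈ K_v}`, with a child for each such `b` (equality branch `a·x = b`). -/
inductive ETree (n : ℕ) : Type where
  | leaf : ETree n
  | node : (Fin n → ℤ) → ℝ → ℝ → (ℤ → ETree n) → ETree n

/-- Number of nodes of an enumerative branching proof (children outside the
interval `[l, u]` do not count). -/
noncomputable def ETree.size {n : ℕ} : ETree n → ℕ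
  | .leaf => 1
  | .node _ l u c => 1 + ∑ b ∈ Finset.Icc ⌈l⌉ ⌊u⌋, (c b).size

/-- Validity of an enumerative branching proof for `K`: at a node, the bounds
must contain `{a·x : x ∈ K}` and each integer child relaxation must be valid;
a leaf has empty relaxation (a node with no integer `b ∈ [l,u]` handles the
"integer-free interval" leaf case). -/
def EValid {n : ℕ} (K : Set (Fin n → ℝ)) : ETree n → Prop
  | .leaf => K = ∅
  | .node a l u c =>
      (∀ x ∈ K, l ≤ (∑ j, (a j : ℝ) * x j) ∧ (∑ j, (a j : ℝ) * x j) ≤ u) ∧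
      ∀ b : ℤ, l ≤ (b : ℝ) → (b : ℝ) ≤ u →
        EValid (K ∩ {x | ∑ j, (a j : ℝ) * x j = (b : ℝ)}) (c b)

namespace Aux15

variable {n : ℕ}

def lin (w : Fin n → ℝ) (x : Fin n → ℝ) : ℝ := ∑ j, w j * x j

def R (w : Fin n → ℤ) : Fin n → ℝ := fun j => (w j : ℝ)

lemma lin_continuous (w : Fin n → ℝ) : Continuous (lin w) := by
  unfold lin
  exact continuous_finset_sum _ fun i _ => (continuous_const.mul (continuous_apply i))

lemma cgCut_eq (S : Set (Fin n → ℝ)) (w : Fin n → ℝ) :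
    cgCut S w = S ∩ {x | lin w x ≤ (⌊sSup (lin w '' S)⌋ : ℝ)} := rfl

lemma cgCut_subset (S : Set (Fin n → ℝ)) (w : Fin n → ℝ) : cgCut S w ⊆ S :=
  Set.inter_subset_left

lemma cgList_nil (S : Set (Fin n → ℝ)) : cgList S [] = S := rfl

lemma cgList_cons (S : Set (Fin n → ℝ)) (w : Fin n → ℝ) (L : List (Fin n → ℝ)) :
    cgList S (w :: L) = cgList (cgCut S w) L := rfl

lemma cgList_append (S : Set (Fin n → ℝ)) (L₁ L₂ : List (Fin n → ℝ)) :
    cgList S (L₁ ++ L₂) = cgList (cgList S L₁) L₂ := by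
  unfold cgList; exact List.foldl_append

lemma cgList_subset (S : Set (Fin n → ℝ)) (L : List (Fin n → ℝ)) : cgList S L ⊆ S := by
  induction L generalizing S with
  | nil => exact le_refl S
  | cons w L ih =>
      rw [cgList_cons]
      exact (ih (cgCut S w)).trans (cgCut_subset S w)

lemma isCompact_cgCut {S : Set (Fin n → ℝ)} (hS : IsCompact S) (w : Fin n → ℝ) :
    IsCompact (cgCut S w) :=
  hS.inter_right (isClosed_le (lin_continuous w) continuous_const)

lemma isCompact_cgList {S : Set (Fin n → ℝ)} (hS : IsCompact S) (L : List (Fin n → ℝ)) :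
    IsCompact (cgList S L) := by
  induction L generalizing S with
  | nil => exact hS
  | cons w L ih => exact ih (isCompact_cgCut hS w)

lemma bddAbove_image {S : Set (Fin n → ℝ)} (hS : IsCompact S) (w : Fin n → ℝ) :
    BddAbove (lin w '' S) :=
  (hS.image (lin_continuous w)).bddAbove

lemma cgCut_mono {S' S : Set (Fin n → ℝ)} (h : S' ⊆ S) (hS : IsCompact S)
    (w : Fin n → ℝ) : cgCut S' w ⊆ cgCut S w := by
  intro x hx
  obtain ⟨hxS', hxle⟩ := hx
  refine ⟨h hxS', ?_⟩
  have h1 : sSup (lin w '' S') ≤ sSup (lin w '' S) :=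
    csSup_le_csSup (bddAbove_image hS w) ⟨lin w x, ⟨x, hxS', rfl⟩⟩
      (Set.image_mono h)
  have h2 : (⌊sSup (lin w '' S')⌋ : ℤ) ≤ ⌊sSup (lin w '' S)⌋ := Int.floor_le_floor h1
  calc lin w x ≤ (⌊sSup (lin w '' S')⌋ : ℝ) := hxle
    _ ≤ (⌊sSup (lin w '' S)⌋ : ℝ) := by exact_mod_cast h2

lemma cgList_mono {S' S : Set (Fin n → ℝ)} (h : S' ⊆ S) (hS : IsCompact S)
    (L : List (Fin n → ℝ)) : cgList S' L ⊆ cgList S L := by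
  induction L generalizing S' S with
  | nil => exact h
  | cons w L ih =>
      rw [cgList_cons, cgList_cons]
      exact ih (cgCut_mono h hS w) (isCompact_cgCut hS w)

/-- If the face `S ∩ {a·x = b}` is empty and `a·x ≤ b` on `S`, then cutting with `a`
pushes below `b - 1`. -/
lemma cut_drop {S : Set (Fin n → ℝ)} (hS : IsCompact S) (a : Fin n → ℝ) (b : ℤ)
    (hb : ∀ x ∈ S, lin a x ≤ (b : ℝ))
    (hF : S ∩ {x | lin a x = (b : ℝ)} = ∅) :
    ∀ x ∈ cgCut S a, lin a x ≤ (b : ℝ) - 1 := by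
  intro x hx
  obtain ⟨hxS, hxle⟩ := hx
  obtain ⟨x₀, hx₀S, hmax⟩ := hS.exists_isMaxOn ⟨x, hxS⟩ (lin_continuous a).continuousOn
  have hsup : sSup (lin a '' S) ≤ lin a x₀ := by
    refine csSup_le ⟨lin a x, x, hxS, rfl⟩ ?_
    rintro y ⟨z, hz, rfl⟩
    exact hmax hz
  have hx₀lt : lin a x₀ < (b : ℝ) := by
    rcases lt_or_eq_of_le (hb x₀ hx₀S) with h | h
    · exact h
    · exfalso
      have : x₀ ∈ S ∩ {x | lin a x = (b : ℝ)} := ⟨hx₀S, h⟩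
      rw [hF] at this
      exact this
  have hfl : (⌊sSup (lin a '' S)⌋ : ℤ) ≤ b - 1 := by
    have : ⌊sSup (lin a '' S)⌋ < b := Int.floor_lt.mpr (lt_of_le_of_lt hsup hx₀lt)
    omega
  calc lin a x ≤ (⌊sSup (lin a '' S)⌋ : ℝ) := hxle
    _ ≤ ((b : ℝ) - 1) := by
        have : ((⌊sSup (lin a '' S)⌋ : ℝ)) ≤ ((b - 1 : ℤ) : ℝ) := by exact_mod_cast hfl
        push_cast at this
        linarith


lemma lin_R_add_mul (w a : Fin n → ℤ) (M : ℤ) (x : Fin n → ℝ) :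
    lin (R (fun j => w j + M * a j)) x = lin (R w) x + (M : ℝ) * lin (R a) x := by
  unfold lin R
  rw [Finset.mul_sum, ← Finset.sum_add_distrib]
  apply Finset.sum_congr rfl
  intro j _
  push_cast
  ring

/-- CG lifting lemma: a cut for the face `S ∩ {a·x = b}` can be lifted to a cut for `S`. -/
lemma liftOne {S : Set (Fin n → ℝ)} (hS : IsCompact S) (a : Fin n → ℤ) (b : ℤ)
    (hSb : ∀ x ∈ S, lin (R a) x ≤ (b : ℝ)) (w : Fin n → ℤ) :
    ∃ w' : Fin n → ℤ, cgCut S (R w') ∩ {x | lin (R a) x = (b : ℝ)} ⊆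
      cgCut (S ∩ {x | lin (R a) x = (b : ℝ)}) (R w) := by
  set F := S ∩ {x | lin (R a) x = (b : ℝ)} with hFdef
  by_cases hFne : F.Nonempty
  · -- main case: lift `w` by a large multiple of `a`
    have hSne : S.Nonempty := hFne.mono Set.inter_subset_left
    have hFcomp : IsCompact F := hS.inter_right (isClosed_eq (lin_continuous _) continuous_const)
    set hFw := sSup (lin (R w) '' F) with hFwdef
    have hFwbdd : BddAbove (lin (R w) '' F) := bddAbove_image hFcomp _
    have hFwub : ∀ x ∈ F, lin (R w) x ≤ hFw := fun x hx => le_csSup hFwbdd ⟨x, hx, rfl⟩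
    set ε : ℝ := ((⌊hFw⌋ : ℝ) + 1 - hFw) / 2 with hεdef
    have hεpos : 0 < ε := by
      have := Int.lt_floor_add_one hFw
      simp only [hεdef]
      linarith
    have hεsmall : hFw + ε < (⌊hFw⌋ : ℝ) + 1 := by
      have := Int.lt_floor_add_one hFw
      simp only [hεdef]
      linarith
    -- find δ > 0 such that points of S with a·x ≥ b - δ have w·x ≤ hFw + ε
    obtain ⟨δ, hδpos, hδ⟩ : ∃ δ : ℝ, 0 < δ ∧
        ∀ x ∈ S, (b : ℝ) - δ ≤ lin (R a) x → lin (R w) x ≤ hFw + ε := by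
      set C := S ∩ {x | hFw + ε ≤ lin (R w) x} with hCdef
      by_cases hCne : C.Nonempty
      · have hCcomp : IsCompact C := hS.inter_right (isClosed_le continuous_const (lin_continuous _))
        obtain ⟨x₀, hx₀C, hmax⟩ := hCcomp.exists_isMaxOn hCne (lin_continuous (R a)).continuousOn
        have hx₀lt : lin (R a) x₀ < (b : ℝ) := by
          rcases lt_or_eq_of_le (hSb x₀ hx₀C.1) with h | h
          · exact h
          · exfalso
            have hx₀F : x₀ ∈ F := ⟨hx₀C.1, h⟩
            have h1 := hFwub x₀ hx₀F
            have h2 := hx₀C.2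
            simp only [Set.mem_setOf_eq] at h2
            linarith
        refine ⟨((b : ℝ) - lin (R a) x₀) / 2, by linarith, ?_⟩
        intro x hxS hxa
        by_contra hcon
        push_neg at hcon
        have hxC : x ∈ C := ⟨hxS, le_of_lt hcon⟩
        have := hmax hxC
        simp only [Set.mem_setOf_eq] at this
        linarith
      · refine ⟨1, one_pos, ?_⟩
        intro x hxS _
        by_contra hcon
        push_neg at hcon
        exact hCne ⟨x, hxS, le_of_lt hcon⟩
    set hSw := sSup (lin (R w) '' S) with hSwdef
    have hSwub : ∀ x ∈ S, lin (R w) x ≤ hSw := fun x hx =>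
      le_csSup (bddAbove_image hS _) ⟨x, hx, rfl⟩
    set M : ℤ := max 0 ⌈(hSw - hFw - ε) / δ⌉ with hMdef
    have hM0 : (0 : ℝ) ≤ (M : ℝ) := by
      have : (0 : ℤ) ≤ M := le_max_left _ _
      exact_mod_cast this
    have hMδ : hSw - hFw - ε ≤ (M : ℝ) * δ := by
      have h1 : (hSw - hFw - ε) / δ ≤ (⌈(hSw - hFw - ε) / δ⌉ : ℝ) := Int.le_ceil _
      have h2 : ((⌈(hSw - hFw - ε) / δ⌉ : ℤ) : ℝ) ≤ (M : ℝ) := by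
        have : (⌈(hSw - hFw - ε) / δ⌉ : ℤ) ≤ M := le_max_right _ _
        exact_mod_cast this
      have h3 : (hSw - hFw - ε) / δ ≤ (M : ℝ) := le_trans h1 h2
      calc hSw - hFw - ε = ((hSw - hFw - ε) / δ) * δ := by field_simp
        _ ≤ (M : ℝ) * δ := mul_le_mul_of_nonneg_right h3 (le_of_lt hδpos)
    refine ⟨fun j => w j + M * a j, ?_⟩
    set w' : Fin n → ℤ := fun j => w j + M * a j with hw'def
    -- bound the support function of S in direction w'
    have hkey : ∀ x ∈ S, lin (R w') x ≤ hFw + ε + (M : ℝ) * (b : ℝ) := by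
      intro x hxS
      rw [hw'def, lin_R_add_mul]
      by_cases hcase : (b : ℝ) - δ ≤ lin (R a) x
      · have h1 := hδ x hxS hcase
        have h2 : (M : ℝ) * lin (R a) x ≤ (M : ℝ) * (b : ℝ) :=
          mul_le_mul_of_nonneg_left (hSb x hxS) hM0
        linarith
      · push_neg at hcase
        have h1 := hSwub x hxS
        have h2 : (M : ℝ) * lin (R a) x ≤ (M : ℝ) * ((b : ℝ) - δ) :=
          mul_le_mul_of_nonneg_left (le_of_lt hcase) hM0
        have h3 : (M : ℝ) * ((b : ℝ) - δ) = (M : ℝ) * (b : ℝ) - (M : ℝ) * δ := by ring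
        linarith
    have hsup' : sSup (lin (R w') '' S) ≤ hFw + ε + (M : ℝ) * (b : ℝ) := by
      refine csSup_le ⟨lin (R w') hSne.some, hSne.some, hSne.some_mem, rfl⟩ ?_
      rintro y ⟨z, hz, rfl⟩
      exact hkey z hz
    have hfloor : ⌊sSup (lin (R w') '' S)⌋ ≤ ⌊hFw⌋ + M * b := by
      have h1 : sSup (lin (R w') '' S) < ((⌊hFw⌋ + M * b + 1 : ℤ) : ℝ) := by
        push_cast
        linarith
      have := Int.floor_lt.mpr h1
      omega
    -- conclude the containment
    intro x hx
    obtain ⟨⟨hxS, hxle⟩, hxH⟩ := hx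
    simp only [Set.mem_setOf_eq] at hxH
    have hxF : x ∈ F := ⟨hxS, hxH⟩
    refine ⟨hxF, ?_⟩
    show lin (R w) x ≤ (⌊sSup (lin (R w) '' F)⌋ : ℝ)
    have hxle' : lin (R w') x ≤ ((⌊hFw⌋ + M * b : ℤ) : ℝ) := by
      calc lin (R w') x ≤ (⌊sSup (lin (R w') '' S)⌋ : ℝ) := hxle
        _ ≤ ((⌊hFw⌋ + M * b : ℤ) : ℝ) := by exact_mod_cast hfloor
    rw [hw'def, lin_R_add_mul, hxH] at hxle'
    push_cast at hxle'
    rw [← hFwdef]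
    linarith
  · -- empty face: one cut with `a` separates from the hyperplane
    refine ⟨a, ?_⟩
    intro x hx
    obtain ⟨hxcut, hxH⟩ := hx
    exfalso
    have hdrop := cut_drop hS (R a) b hSb (Set.not_nonempty_iff_eq_empty.mp hFne) x hxcut
    simp only [Set.mem_setOf_eq] at hxH
    linarith [hdrop, hxH.le]


lemma liftList {S : Set (Fin n → ℝ)} (hS : IsCompact S) (a : Fin n → ℤ) (b : ℤ)
    (hSb : ∀ x ∈ S, lin (R a) x ≤ (b : ℝ)) (L : List (Fin n → ℤ)) :
    ∃ L' : List (Fin n → ℤ), L'.length = L.length ∧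
      cgList S (L'.map R) ∩ {x | lin (R a) x = (b : ℝ)} ⊆
        cgList (S ∩ {x | lin (R a) x = (b : ℝ)}) (L.map R) := by
  induction L generalizing S with
  | nil =>
      exact ⟨[], rfl, by simp [cgList_nil]⟩
  | cons w L ih =>
      obtain ⟨w', hw'⟩ := liftOne hS a b hSb w
      set S₁ := cgCut S (R w') with hS₁def
      have hS₁comp : IsCompact S₁ := isCompact_cgCut hS _
      have hS₁b : ∀ x ∈ S₁, lin (R a) x ≤ (b : ℝ) := fun x hx => hSb x (cgCut_subset S (R w') hx)
      obtain ⟨L'', hlen, hsub⟩ := ih hS₁comp hS₁b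
      refine ⟨w' :: L'', by simp [hlen], ?_⟩
      have hHcomp : IsCompact (cgCut (S ∩ {x | lin (R a) x = (b : ℝ)}) (R w)) :=
        isCompact_cgCut (hS.inter_right (isClosed_eq (lin_continuous _) continuous_const)) _
      calc cgList S ((w' :: L'').map R) ∩ {x | lin (R a) x = (b : ℝ)}
          = cgList S₁ (L''.map R) ∩ {x | lin (R a) x = (b : ℝ)} := rfl
        _ ⊆ cgList (S₁ ∩ {x | lin (R a) x = (b : ℝ)}) (L.map R) := hsub
        _ ⊆ cgList (cgCut (S ∩ {x | lin (R a) x = (b : ℝ)}) (R w)) (L.map R) :=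
            cgList_mono hw' hHcomp _
        _ = cgList (S ∩ {x | lin (R a) x = (b : ℝ)}) ((w :: L).map R) := rfl

lemma size_pos (t : ETree n) : 1 ≤ t.size := by
  cases t <;> simp [ETree.size]

theorem main (T : ETree n) : ∀ K : Set (Fin n → ℝ), IsCompact K → EValid K T →
    ∃ L : List (Fin n → ℤ), L.length ≤ 2 * T.size - 1 ∧ cgList K (L.map R) = ∅ := by
  induction T with
  | leaf =>
      intro K _ hT
      have hKe : K = ∅ := hT
      exact ⟨[], by simp [ETree.size], by simp [cgList_nil, hKe]⟩
  | node a l u c ih =>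
      intro K hK hT
      obtain ⟨hbounds, hchild⟩ := hT
      have hbounds' : ∀ x ∈ K, l ≤ lin (R a) x ∧ lin (R a) x ≤ u := hbounds
      by_cases hKe : K = ∅
      · exact ⟨[], Nat.zero_le _, by simp [cgList_nil, hKe]⟩
      have hKne : K.Nonempty := Set.nonempty_iff_ne_empty.mpr hKe
      -- inner loop: push the hyperplane down from b to below ⌈l⌉
      have loop : ∀ k : ℕ, ∀ b : ℤ, b ≤ ⌊u⌋ → b < ⌈l⌉ + k →
          ∀ S : Set (Fin n → ℝ), IsCompact S → S ⊆ K →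
          (∀ x ∈ S, lin (R a) x ≤ (b : ℝ)) →
          ∃ L : List (Fin n → ℤ),
            L.length ≤ 2 * ∑ t ∈ Finset.Icc ⌈l⌉ b, (c t).size ∧
            cgList S (L.map R) = ∅ := by
        intro k
        induction k with
        | zero =>
            intro b _ hblt S _ hSK hSb
            have hSe : S = ∅ := by
              rw [Set.eq_empty_iff_forall_notMem]
              intro x hxS
              have h1 := (hbounds' x (hSK hxS)).1
              have h2 := hSb x hxS
              have h3 : (b : ℝ) < l := Int.lt_ceil.mp (by omega)
              linarith
            exact ⟨[], Nat.zero_le _, by simp [cgList_nil, hSe]⟩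
        | succ k ihk =>
            intro b hbu hblt S hScomp hSK hSb
            by_cases hbl : b < ⌈l⌉
            · exact ihk b hbu (by omega) S hScomp hSK hSb
            push_neg at hbl
            have hlb : l ≤ (b : ℝ) := Int.ceil_le.mp hbl
            have hbu' : (b : ℝ) ≤ u := Int.le_floor.mp hbu
            have hc := hchild b hlb hbu'
            have hKbcomp : IsCompact (K ∩ {x | ∑ j, ((a j : ℝ)) * x j = (b : ℝ)}) :=
              hK.inter_right (isClosed_eq (lin_continuous (R a)) continuous_const)
            obtain ⟨Lb, hLblen, hLbe⟩ := ih b _ hKbcomp hc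
            obtain ⟨L₁, hL₁len, hL₁sub⟩ := liftList hScomp a b hSb Lb
            set S' := cgList S (L₁.map R) with hS'def
            have hS'comp : IsCompact S' := isCompact_cgList hScomp _
            have hS'S : S' ⊆ S := cgList_subset _ _
            have hS'H : S' ∩ {x | lin (R a) x = (b : ℝ)} = ∅ := by
              rw [← Set.subset_empty_iff]
              calc S' ∩ {x | lin (R a) x = (b : ℝ)}
                  ⊆ cgList (S ∩ {x | lin (R a) x = (b : ℝ)}) (Lb.map R) := hL₁sub
                _ ⊆ cgList (K ∩ {x | lin (R a) x = (b : ℝ)}) (Lb.map R) :=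
                    cgList_mono (Set.inter_subset_inter_left _ hSK) hKbcomp _
                _ = ∅ := hLbe
            have hdrop := cut_drop hS'comp (R a) b (fun x hx => hSb x (hS'S hx)) hS'H
            have hdrop' : ∀ x ∈ cgCut S' (R a), lin (R a) x ≤ (((b - 1 : ℤ)) : ℝ) := by
              intro x hx
              have := hdrop x hx
              push_cast
              linarith
            obtain ⟨L₂, hL₂len, hL₂e⟩ := ihk (b - 1) (by omega) (by omega) (cgCut S' (R a))
              (isCompact_cgCut hS'comp _)
              ((cgCut_subset _ _).trans (hS'S.trans hSK)) hdrop'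
            refine ⟨L₁ ++ a :: L₂, ?_, ?_⟩
            · have hsum : ∑ t ∈ Finset.Icc ⌈l⌉ b, (c t).size
                  = ∑ t ∈ Finset.Icc ⌈l⌉ (b - 1), (c t).size + (c b).size := by
                have hins : Finset.Icc ⌈l⌉ b = insert b (Finset.Icc ⌈l⌉ (b - 1)) := by
                  ext t
                  simp only [Finset.mem_Icc, Finset.mem_insert]
                  omega
                have hnot : b ∉ Finset.Icc ⌈l⌉ (b - 1) := by
                  simp only [Finset.mem_Icc]
                  omega
                rw [hins, Finset.sum_insert hnot]
                omega
              have hpos := size_pos (c b)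
              simp only [List.length_append, List.length_cons, hL₁len]
              omega
            · rw [List.map_append, cgList_append, ← hS'def, List.map_cons, cgList_cons]
              exact hL₂e
      -- outer wrap-up: first cut with a, then run the loop
      set b₀ : ℤ := ⌊sSup (lin (R a) '' K)⌋ with hb₀def
      have hb₀u : b₀ ≤ ⌊u⌋ := by
        apply Int.floor_le_floor
        refine csSup_le ⟨lin (R a) hKne.some, hKne.some, hKne.some_mem, rfl⟩ ?_
        rintro y ⟨z, hz, rfl⟩
        exact (hbounds' z hz).2
      have hS₀b : ∀ x ∈ cgCut K (R a), lin (R a) x ≤ (b₀ : ℝ) := fun x hx => hx.2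
      obtain ⟨L', hL'len, hL'e⟩ := loop (b₀ - ⌈l⌉ + 1).toNat b₀ hb₀u (by omega)
        (cgCut K (R a)) (isCompact_cgCut hK _) (cgCut_subset _ _) hS₀b
      refine ⟨a :: L', ?_, ?_⟩
      · have hsub : ∑ t ∈ Finset.Icc ⌈l⌉ b₀, (c t).size
            ≤ ∑ t ∈ Finset.Icc ⌈l⌉ ⌊u⌋, (c t).size :=
          Finset.sum_le_sum_of_subset (Finset.Icc_subset_Icc_right hb₀u)
        simp only [List.length_cons, ETree.size]
        omega
      · rw [List.map_cons, cgList_cons]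
        exact hL'e

end Aux15

/-- Theorem 1.4: an enumerative branching proof `T` for a compact convex
integer-free `K` can be serialized into a CP refutation of length at most
`2|T| − 1`. -/
theorem stmt15 (n : ℕ) (K : Set (Fin n → ℝ)) (hK : IsCompact K)
    (hconv : Convex ℝ K)
    (hfree : ∀ x ∈ K, ¬ ∀ i, ∃ z : ℤ, x i = (z : ℝ))
    (T : ETree n) (hT : EValid K T) :
    ∃ L : List (Fin n → ℤ), L.length ≤ 2 * T.size - 1 ∧
      cgList K (L.map fun w => fun j => ((w j : ℝ))) = ∅ := by
  exact Aux15.main T K hK hT
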